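/- Let n ∈ ℕ, let F be a Borel probability measure on [0,∞)^n, and let B ⊆ A ⊆ [0,∞)^n be Borel sets. Then F(B) · Rev(F|_B) ≤ F(A) · Rev(F|_A) in [0,∞], with the convention that F(S) · Rev(F|_S) := 0 whenever F(S) = 0. -/

import Mathlib

open MeasureTheory ProbabilityTheory Set
open scoped NNReal ENNReal

noncomputable section

/-- The space of buyer types for `n` items: vectors in `[0,∞)^n`. -/
abbrev BuyerType (n : ℕ) := Fin n → ℝ≥0

/-- An `n`-item outcome: allocation probabilities together with a price. -/
abbrev Outcome (n : ℕ) := (Fin n → ℝ) × ℝ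

/-- An outcome is valid if all allocation probabilities are in `[0,1]` and the price is `≥ 0`. -/
def ValidOutcome {n : ℕ} (e : Outcome n) : Prop :=
  (∀ i, 0 ≤ e.1 i ∧ e.1 i ≤ 1) ∧ 0 ≤ e.2

/-- The zero entry `(0,…,0;0)`. -/
def zeroEntry (n : ℕ) : Outcome n := (fun _ => 0, 0)

/-- The utility of buyer type `v` from outcome `e`. -/
def utility {n : ℕ} (e : Outcome n) (v : BuyerType n) : ℝ :=
  (∑ i, e.1 i * (v i : ℝ)) - e.2

/-- An individually rational menu: a set of valid outcomes containing the zero entry. -/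
def IRMenu {n : ℕ} (M : Set (Outcome n)) : Prop :=
  (∀ e ∈ M, ValidOutcome e) ∧ zeroEntry n ∈ M

/-- A choice function for menu `M`: for every buyer type it picks a utility-maximizing
entry of maximal price among the utility-maximizing entries, with Borel-measurable price. -/
def IsChoice {n : ℕ} (M : Set (Outcome n)) (t : BuyerType n → Outcome n) : Prop :=
  (∀ v, t v ∈ M) ∧
  (∀ v, ∀ e ∈ M, utility e v ≤ utility (t v) v) ∧
  (∀ v, ∀ e ∈ M, utility e v = utility (t v) v → e.2 ≤ (t v).2) ∧
  Measurable fun v => (t v).2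

/-- The revenue of a menu equipped with choice function `t` from distribution `F`. -/
def revenue {n : ℕ} (t : BuyerType n → Outcome n) (F : Measure (BuyerType n)) : ℝ≥0∞ :=
  ∫⁻ v, ENNReal.ofReal ((t v).2) ∂F

/-- The menu size: the number of entries other than the zero entry. -/
def menuSize {n : ℕ} (M : Set (Outcome n)) : ℕ∞ :=
  (M \ {zeroEntry n}).encard

/-- The optimal revenue obtainable from `F` by an IR menu with a choice function. -/
def Rev {n : ℕ} (F : Measure (BuyerType n)) : ℝ≥0∞ :=
  ⨆ (Mt : Set (Outcome n) × (BuyerType n → Outcome n))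
    (_ : IRMenu Mt.1 ∧ IsChoice Mt.1 Mt.2), revenue Mt.2 F

/-- The optimal revenue obtainable from `F` by an IR menu of menu size at most `C`. -/
def RevC {n : ℕ} (C : ℕ) (F : Measure (BuyerType n)) : ℝ≥0∞ :=
  ⨆ (Mt : Set (Outcome n) × (BuyerType n → Outcome n))
    (_ : IRMenu Mt.1 ∧ IsChoice Mt.1 Mt.2 ∧ menuSize Mt.1 ≤ (C : ℕ∞)),
    revenue Mt.2 F

/-- Embedding of a single item value as a buyer type for one item. -/
def toOne (x : ℝ≥0) : BuyerType 1 := fun _ => x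

/-- The optimal single-item revenue from a value distribution `G` on `[0,∞)`. -/
def Rev1 (G : Measure ℝ≥0) : ℝ≥0∞ := Rev (G.map toOne)

/-- `EU n H`: the set of buyer types with at most one coordinate strictly greater than `H`. -/
def EU (n : ℕ) (H : ℝ) : Set (BuyerType n) :=
  {v | {i : Fin n | H < (v i : ℝ)}.Subsingleton}

/-- A menu is `E`-exclusive if every entry priced above `E` allocates at most one item with
positive probability. -/
def Exclusive {n : ℕ} (E : ℝ) (M : Set (Outcome n)) : Prop :=
  ∀ e ∈ M, E < e.2 → {i : Fin n | 0 < e.1 i}.Subsingleton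


lemma mul_rev_cond_eq (n : ℕ) (F : Measure (BuyerType n)) [IsFiniteMeasure F]
    (S : Set (BuyerType n)) (hS0 : F S ≠ 0) :
    F S * Rev (F[|S]) =
      ⨆ (Mt : Set (Outcome n) × (BuyerType n → Outcome n))
        (_ : IRMenu Mt.1 ∧ IsChoice Mt.1 Mt.2),
        ∫⁻ v in S, ENNReal.ofReal ((Mt.2 v).2) ∂F := by
  rw [Rev, ENNReal.mul_iSup]
  congr 1; ext Mt
  rw [ENNReal.mul_iSup]
  congr 1; ext h
  rw [revenue, ProbabilityTheory.cond, lintegral_smul_measure, smul_eq_mul, ← mul_assoc,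
    ENNReal.mul_inv_cancel hS0 (measure_ne_top F S), one_mul]

/-- For Borel sets `B ⊆ A`, one has `F(B)·Rev(F|_B) ≤ F(A)·Rev(F|_A)`
(here `F|_S` is the conditional measure, which is the zero measure when `F(S) = 0`,
so the convention `F(S)·Rev(F|_S) = 0` for `F(S) = 0` holds automatically). -/
theorem subset_restricted_rev_le
    (n : ℕ) (F : Measure (BuyerType n)) (hF : IsProbabilityMeasure F)
    (A B : Set (BuyerType n)) (hA : MeasurableSet A) (hB : MeasurableSet B) (hBA : B ⊆ A) :
    F B * Rev (F[|B]) ≤ F A * Rev (F[|A]) := by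
  by_cases hB0 : F B = 0
  · simp [hB0]
  have hA0 : F A ≠ 0 := fun h => hB0 (measure_mono_null hBA h)
  rw [mul_rev_cond_eq n F B hB0, mul_rev_cond_eq n F A hA0]
  exact iSup_mono fun Mt => iSup_mono' fun h =>
    ⟨h, lintegral_mono' (Measure.restrict_mono hBA le_rfl) le_rfl⟩

end
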